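/- Characterization of flat formulas: for any MT₀-formula φ, the following are equivalent: (a) φ is flat; (b) φ≡α for some classical modal formula α; (c) ¬¬φ≡φ; (d) ⊨φ⊗¬φ (where ¬φ abbreviates φ→⊥). -/

import Mathlib

/-- Classical modal formulas: α ::= p | ⊥ | ¬α | α∧α | α⊗α | α→α | □α | ◇α. -/
inductive CForm : Type where
  | var : ℕ → CForm
  | bot : CForm
  | neg : CForm → CForm
  | and : CForm → CForm → CForm
  | tensor : CForm → CForm → CForm
  | impl : CForm → CForm → CForm
  | box : CForm → CForm
  | dia : CForm → CForm

/-- Formulas of full modal downward closed team logic MT₀: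
φ ::= α | =(α₁,…,αₙ,β) | φ∧φ | φ⊗φ | φ∨φ | φ→φ | □φ | ◇φ, with α,αᵢ,β classical.
Classical formulas are embedded structurally; the primitive classical negation ¬α
is represented by the constructor `cneg`. -/
inductive MTForm : Type where
  | var : ℕ → MTForm
  | bot : MTForm
  | cneg : CForm → MTForm
  | dep : List CForm → CForm → MTForm
  | and : MTForm → MTForm → MTForm
  | tensor : MTForm → MTForm → MTForm
  | or : MTForm → MTForm → MTForm
  | impl : MTForm → MTForm → MTForm
  | box : MTForm → MTForm
  | dia : MTForm → MTForm

/-- The structural embedding of classical modal formulas into MT₀ formulas. -/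
def CForm.toMT : CForm → MTForm
  | .var p => .var p
  | .bot => .bot
  | .neg α => .cneg α
  | .and α β => .and α.toMT β.toMT
  | .tensor α β => .tensor α.toMT β.toMT
  | .impl α β => .impl α.toMT β.toMT
  | .box α => .box α.toMT
  | .dia α => .dia α.toMT

/-- A (classical modal) Kripke model M = (W,R,V) with W nonempty. -/
structure KModel where
  W : Type
  ne : Nonempty W
  R : W → W → Prop
  V : ℕ → Set W

/-- R(X) = {w : ∃ v ∈ X, vRw}. -/
def KModel.img (M : KModel) (X : Set M.W) : Set M.W := {w | ∃ v ∈ X, M.R v w}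

/-- Y is a successor team of X: Y ⊆ R(X) and Y ∩ R(w) ≠ ∅ for every w ∈ X. -/
def KModel.succT (M : KModel) (X Y : Set M.W) : Prop :=
  Y ⊆ M.img X ∧ ∀ w ∈ X, ∃ u ∈ Y, M.R w u

/-- Team semantics for classical modal formulas. -/
def KModel.csat (M : KModel) : Set M.W → CForm → Prop
  | X, .var p => X ⊆ M.V p
  | X, .bot => X = ∅
  | X, .neg α => ∀ w ∈ X, ¬ M.csat {w} α
  | X, .and α β => M.csat X α ∧ M.csat X β
  | X, .tensor α β => ∃ Y Z, X = Y ∪ Z ∧ M.csat Y α ∧ M.csat Z β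
  | X, .impl α β => ∀ Y ⊆ X, M.csat Y α → M.csat Y β
  | X, .box α => M.csat (M.img X) α
  | X, .dia α => ∃ Y, M.succT X Y ∧ M.csat Y α

/-- Team semantics for MT₀ formulas. -/
def KModel.sat (M : KModel) : Set M.W → MTForm → Prop
  | X, .var p => X ⊆ M.V p
  | X, .bot => X = ∅
  | X, .cneg α => ∀ w ∈ X, ¬ M.csat {w} α
  | X, .dep αs β => ∀ w ∈ X, ∀ u ∈ X,
      (∀ α ∈ αs, (M.csat {w} α ↔ M.csat {u} α)) → (M.csat {w} β ↔ M.csat {u} β)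
  | X, .and φ ψ => M.sat X φ ∧ M.sat X ψ
  | X, .tensor φ ψ => ∃ Y Z, X = Y ∪ Z ∧ M.sat Y φ ∧ M.sat Z ψ
  | X, .or φ ψ => M.sat X φ ∨ M.sat X ψ
  | X, .impl φ ψ => ∀ Y ⊆ X, M.sat Y φ → M.sat Y ψ
  | X, .box φ => M.sat (M.img X) φ
  | X, .dia φ => ∃ Y, M.succT X Y ∧ M.sat Y φ

/-- ⊨φ : truth on every team of every Kripke model. -/
def MTValid (φ : MTForm) : Prop := ∀ (M : KModel) (X : Set M.W), M.sat X φ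

/-- φ⊨ψ : semantic entailment. -/
def MTEntails (φ ψ : MTForm) : Prop := ∀ (M : KModel) (X : Set M.W), M.sat X φ → M.sat X ψ

/-- φ≡ψ : semantic equivalence. -/
def MTEquiv (φ ψ : MTForm) : Prop := MTEntails φ ψ ∧ MTEntails ψ φ

/-- ¬φ abbreviates φ→⊥ (MT₀-level negation). -/
def mneg (φ : MTForm) : MTForm := φ.impl .bot

/-- A formula is flat if it is satisfied by a team iff it is satisfied by every
singleton subteam. -/
def Flat (φ : MTForm) : Prop :=
  ∀ (M : KModel) (X : Set M.W), M.sat X φ ↔ ∀ w ∈ X, M.sat {w} φ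


/-! ### Auxiliary infrastructure -/

lemma img_empty (M : KModel) : M.img ∅ = ∅ := by
  ext w; simp [KModel.img]

lemma img_mono (M : KModel) {X Y : Set M.W} (h : X ⊆ Y) : M.img X ⊆ M.img Y := by
  rintro w ⟨v, hv, hr⟩; exact ⟨v, h hv, hr⟩

lemma csat_empty (M : KModel) (α : CForm) : M.csat ∅ α := by
  induction α with
  | var p => simp [KModel.csat]
  | bot => simp [KModel.csat]
  | neg α => simp [KModel.csat]
  | and α β ih1 ih2 => exact ⟨ih1, ih2⟩
  | tensor α β ih1 ih2 => exact ⟨∅, ∅, by simp, ih1, ih2⟩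
  | impl α β ih1 ih2 =>
      intro Y hY _; rw [Set.subset_empty_iff.mp hY]; exact ih2
  | box α ih => show M.csat (M.img ∅) α; rw [img_empty]; exact ih
  | dia α ih =>
      exact ⟨∅, ⟨by simp, fun w hw => absurd hw (Set.notMem_empty w)⟩, ih⟩

lemma csat_flat (M : KModel) (α : CForm) : ∀ X : Set M.W,
    M.csat X α ↔ ∀ w ∈ X, M.csat {w} α := by
  induction α with
  | var p => intro X; simp [KModel.csat, Set.subset_def]
  | bot =>
      intro X
      simp only [KModel.csat, Set.eq_empty_iff_forall_notMem]
      constructor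
      · intro h w hw; exact absurd hw (h w)
      · intro h w hw
        exact absurd (h w hw) (by simp [Set.eq_empty_iff_forall_notMem])
  | neg α =>
      intro X
      show (∀ w ∈ X, ¬ M.csat {w} α) ↔ ∀ w ∈ X, (∀ u ∈ ({w} : Set M.W), ¬ M.csat {u} α)
      simp
  | and α β ih1 ih2 =>
      intro X
      show (M.csat X α ∧ M.csat X β) ↔ ∀ w ∈ X, M.csat {w} α ∧ M.csat {w} β
      rw [ih1, ih2]
      constructor
      · rintro ⟨h1, h2⟩ w hw; exact ⟨h1 w hw, h2 w hw⟩
      · intro h; exact ⟨fun w hw => (h w hw).1, fun w hw => (h w hw).2⟩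
  | tensor α β ih1 ih2 =>
      intro X
      constructor
      · rintro ⟨Y, Z, hX, hY, hZ⟩ w hw
        rcases (hX ▸ hw : w ∈ Y ∪ Z) with h | h
        · exact ⟨{w}, ∅, by simp, (ih1 Y).mp hY w h, csat_empty M β⟩
        · exact ⟨∅, {w}, by simp, csat_empty M α, (ih2 Z).mp hZ w h⟩
      · intro h
        refine ⟨{w ∈ X | M.csat {w} α}, {w ∈ X | ¬ M.csat {w} α}, ?_, ?_, ?_⟩
        · ext w; by_cases hc : M.csat {w} α <;> simp [hc]
        · exact (ih1 _).mpr fun w hw => hw.2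
        · refine (ih2 _).mpr fun w hw => ?_
          obtain ⟨Y, Z, hX, hY, hZ⟩ := h w hw.1
          have hwYZ : w ∈ Y ∪ Z := hX ▸ rfl
          rcases hwYZ with hwY | hwZ
          · exact absurd ((ih1 Y).mp hY w hwY) hw.2
          · have : Z = {w} := by
              apply Set.Subset.antisymm
              · intro z hz
                have : z ∈ Y ∪ Z := Or.inr hz
                rw [← hX] at this; exact this
              · intro z hz; rw [hz]; exact hwZ
            rw [← this]; exact hZ
  | impl α β ih1 ih2 =>
      intro X
      constructor
      · intro h w hw Y hY hYα
        exact h Y (hY.trans (Set.singleton_subset_iff.mpr hw)) hYα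
      · intro h Y hYX hYα
        refine (ih2 Y).mpr fun w hw => ?_
        exact h w (hYX hw) {w} (le_refl _) ((ih1 Y).mp hYα w hw)
  | box α ih =>
      intro X
      show M.csat (M.img X) α ↔ ∀ w ∈ X, M.csat (M.img {w}) α
      rw [ih]
      constructor
      · intro h w hw
        refine (ih _).mpr fun u hu => ?_
        exact h u (img_mono M (Set.singleton_subset_iff.mpr hw) hu)
      · rintro h u ⟨v, hv, hr⟩
        exact (ih _).mp (h v hv) u ⟨v, rfl, hr⟩
  | dia α ih =>
      intro X
      constructor
      · rintro ⟨Y, ⟨hYsub, hYall⟩, hY⟩ w hw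
        obtain ⟨u, hu, hr⟩ := hYall w hw
        exact ⟨{u}, ⟨Set.singleton_subset_iff.mpr ⟨w, rfl, hr⟩,
          fun v hv => ⟨u, rfl, hv ▸ hr⟩⟩, (ih Y).mp hY u hu⟩
      · intro h
        refine ⟨{u | u ∈ M.img X ∧ M.csat {u} α}, ⟨fun u hu => hu.1, ?_⟩, ?_⟩
        · intro w hw
          obtain ⟨Y, ⟨hYsub, hYall⟩, hY⟩ := h w hw
          obtain ⟨u, hu, hr⟩ := hYall w rfl
          exact ⟨u, ⟨⟨w, hw, hr⟩, (ih Y).mp hY u hu⟩, hr⟩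
        · exact (ih _).mpr fun u hu => hu.2

lemma csat_mono (M : KModel) {α : CForm} {X Y : Set M.W}
    (h : M.csat X α) (hYX : Y ⊆ X) : M.csat Y α :=
  (csat_flat M α Y).mpr fun w hw => (csat_flat M α X).mp h w (hYX hw)

lemma csat_singleton_neg (M : KModel) (w : M.W) (α : CForm) :
    M.csat {w} (.neg α) ↔ ¬ M.csat {w} α := by
  show (∀ u ∈ ({w} : Set M.W), ¬ M.csat {u} α) ↔ _
  simp

lemma csat_impl_iff (M : KModel) (a b : CForm) (X : Set M.W) :
    M.csat X (.impl a b) ↔ M.csat (X ∩ {w | M.csat {w} a}) b := by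
  constructor
  · intro h
    exact h _ Set.inter_subset_left ((csat_flat M a _).mpr fun w hw => hw.2)
  · intro h Y hYX hYa
    exact csat_mono M h fun w hw => ⟨hYX hw, (csat_flat M a Y).mp hYa w hw⟩


lemma sat_empty (M : KModel) (φ : MTForm) : M.sat ∅ φ := by
  induction φ with
  | var p => simp [KModel.sat]
  | bot => simp [KModel.sat]
  | cneg α => simp [KModel.sat]
  | dep αs β => intro w hw; exact absurd hw (Set.notMem_empty w)
  | and φ ψ ih1 ih2 => exact ⟨ih1, ih2⟩
  | tensor φ ψ ih1 ih2 => exact ⟨∅, ∅, by simp, ih1, ih2⟩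
  | or φ ψ ih1 ih2 => exact Or.inl ih1
  | impl φ ψ ih1 ih2 =>
      intro Y hY _; rw [Set.subset_empty_iff.mp hY]; exact ih2
  | box φ ih => show M.sat (M.img ∅) φ; rw [img_empty]; exact ih
  | dia φ ih =>
      exact ⟨∅, ⟨by simp, fun w hw => absurd hw (Set.notMem_empty w)⟩, ih⟩

lemma sat_mono (M : KModel) (φ : MTForm) : ∀ {X Y : Set M.W},
    M.sat X φ → Y ⊆ X → M.sat Y φ := by
  induction φ with
  | var p => intro X Y h hYX; exact hYX.trans h
  | bot => intro X Y h hYX; rw [h] at hYX; exact Set.subset_empty_iff.mp hYX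
  | cneg α => intro X Y h hYX w hw; exact h w (hYX hw)
  | dep αs β => intro X Y h hYX w hw u hu; exact h w (hYX hw) u (hYX hu)
  | and φ ψ ih1 ih2 =>
      rintro X Y ⟨h1, h2⟩ hYX; exact ⟨ih1 h1 hYX, ih2 h2 hYX⟩
  | tensor φ ψ ih1 ih2 =>
      rintro X Y ⟨A, B, hX, hA, hB⟩ hYX
      refine ⟨A ∩ Y, B ∩ Y, ?_, ih1 hA Set.inter_subset_left,
        ih2 hB Set.inter_subset_left⟩
      rw [← Set.union_inter_distrib_right, ← hX]
      exact (Set.inter_eq_self_of_subset_right hYX).symm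
  | or φ ψ ih1 ih2 =>
      rintro X Y (h | h) hYX
      · exact Or.inl (ih1 h hYX)
      · exact Or.inr (ih2 h hYX)
  | impl φ ψ ih1 ih2 =>
      intro X Y h hYX Z hZY hZ; exact h Z (hZY.trans hYX) hZ
  | box φ ih =>
      intro X Y h hYX; exact ih h (img_mono M hYX)
  | dia φ ih =>
      rintro X Y ⟨Z, ⟨hZsub, hZall⟩, hZ⟩ hYX
      refine ⟨Z ∩ M.img Y, ⟨Set.inter_subset_right, ?_⟩, ih hZ Set.inter_subset_left⟩
      intro w hw
      obtain ⟨u, hu, hr⟩ := hZall w (hYX hw)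
      exact ⟨u, ⟨hu, ⟨w, hw, hr⟩⟩, hr⟩

lemma sat_toMT (M : KModel) (α : CForm) : ∀ X : Set M.W,
    M.sat X α.toMT ↔ M.csat X α := by
  induction α with
  | var p => intro X; exact Iff.rfl
  | bot => intro X; exact Iff.rfl
  | neg α => intro X; exact Iff.rfl
  | and α β ih1 ih2 =>
      intro X
      show (M.sat X α.toMT ∧ M.sat X β.toMT) ↔ (M.csat X α ∧ M.csat X β)
      rw [ih1, ih2]
  | tensor α β ih1 ih2 =>
      intro X
      show (∃ Y Z, X = Y ∪ Z ∧ M.sat Y α.toMT ∧ M.sat Z β.toMT) ↔ _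
      show _ ↔ ∃ Y Z, X = Y ∪ Z ∧ M.csat Y α ∧ M.csat Z β
      exact exists_congr fun Y => exists_congr fun Z => by rw [ih1, ih2]
  | impl α β ih1 ih2 =>
      intro X
      show (∀ Y ⊆ X, M.sat Y α.toMT → M.sat Y β.toMT) ↔
        (∀ Y ⊆ X, M.csat Y α → M.csat Y β)
      exact forall_congr' fun Y => forall_congr' fun _ => by rw [ih1, ih2]
  | box α ih =>
      intro X
      show M.sat (M.img X) α.toMT ↔ M.csat (M.img X) α
      exact ih _
  | dia α ih =>
      intro X
      show (∃ Y, M.succT X Y ∧ M.sat Y α.toMT) ↔ ∃ Y, M.succT X Y ∧ M.csat Y α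
      exact exists_congr fun Y => and_congr_right fun _ => ih Y


/-- Pairwise conjunctions of two disjunction-lists. -/
def pand (L K : List CForm) : List CForm :=
  L.flatMap fun a => K.map fun b => a.and b

/-- Pairwise tensors of two disjunction-lists. -/
def ptens (L K : List CForm) : List CForm :=
  L.flatMap fun a => K.map fun b => a.tensor b

/-- Implication of a classical formula into a disjunction-list. -/
def pimpl (a : CForm) (K : List CForm) : List CForm := K.map fun b => a.impl b

/-- Conjunction (as disjunction-lists) of a list of disjunction-lists. -/
def bigAnd : List (List CForm) → List CForm
  | [] => [CForm.impl .bot .bot]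
  | L :: Ls => pand L (bigAnd Ls)

/-- Translation of a dependence atom into a disjunction-list. -/
def depT : List CForm → CForm → List CForm
  | [], β => [β, .neg β]
  | γ :: αs, β => pand (pimpl γ (depT αs β)) (pimpl (.neg γ) (depT αs β))

/-- Translation of an MT₀ formula into an equivalent disjunction-list of
classical formulas. -/
def mtTrans : MTForm → List CForm
  | .var p => [.var p]
  | .bot => [.bot]
  | .cneg α => [.neg α]
  | .dep αs β => depT αs β
  | .and φ ψ => pand (mtTrans φ) (mtTrans ψ)
  | .tensor φ ψ => ptens (mtTrans φ) (mtTrans ψ)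
  | .or φ ψ => mtTrans φ ++ mtTrans ψ
  | .impl φ ψ => bigAnd ((mtTrans φ).map fun a => pimpl a (mtTrans ψ))
  | .box φ => (mtTrans φ).map .box
  | .dia φ => (mtTrans φ).map .dia

/-- Team satisfaction of a disjunction-list. -/
def orSem (M : KModel) (X : Set M.W) (L : List CForm) : Prop :=
  ∃ a ∈ L, M.csat X a

lemma orSem_pand (M : KModel) (X : Set M.W) (L K : List CForm) :
    orSem M X (pand L K) ↔ orSem M X L ∧ orSem M X K := by
  simp only [orSem, pand, List.mem_flatMap, List.mem_map]
  constructor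
  · rintro ⟨c, ⟨a, ha, b, hb, rfl⟩, h1, h2⟩
    exact ⟨⟨a, ha, h1⟩, ⟨b, hb, h2⟩⟩
  · rintro ⟨⟨a, ha, h1⟩, ⟨b, hb, h2⟩⟩
    exact ⟨a.and b, ⟨a, ha, b, hb, rfl⟩, h1, h2⟩

lemma orSem_ptens (M : KModel) (X : Set M.W) (L K : List CForm) :
    orSem M X (ptens L K) ↔
      ∃ Y Z, X = Y ∪ Z ∧ orSem M Y L ∧ orSem M Z K := by
  simp only [orSem, ptens, List.mem_flatMap, List.mem_map]
  constructor
  · rintro ⟨c, ⟨a, ha, b, hb, rfl⟩, Y, Z, hX, h1, h2⟩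
    exact ⟨Y, Z, hX, ⟨a, ha, h1⟩, ⟨b, hb, h2⟩⟩
  · rintro ⟨Y, Z, hX, ⟨a, ha, h1⟩, ⟨b, hb, h2⟩⟩
    exact ⟨a.tensor b, ⟨a, ha, b, hb, rfl⟩, Y, Z, hX, h1, h2⟩

lemma orSem_append (M : KModel) (X : Set M.W) (L K : List CForm) :
    orSem M X (L ++ K) ↔ orSem M X L ∨ orSem M X K := by
  simp only [orSem, List.mem_append]
  constructor
  · rintro ⟨a, (h | h), ha⟩
    · exact Or.inl ⟨a, h, ha⟩
    · exact Or.inr ⟨a, h, ha⟩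
  · rintro (⟨a, h, ha⟩ | ⟨a, h, ha⟩)
    · exact ⟨a, Or.inl h, ha⟩
    · exact ⟨a, Or.inr h, ha⟩

lemma orSem_bigAnd (M : KModel) (X : Set M.W) (Ls : List (List CForm)) :
    orSem M X (bigAnd Ls) ↔ ∀ L ∈ Ls, orSem M X L := by
  induction Ls with
  | nil =>
      simp only [bigAnd, List.not_mem_nil]
      constructor
      · intro _ L h; exact absurd h (by simp)
      · intro _
        exact ⟨CForm.impl .bot .bot, by simp, fun Y _ h => h⟩
  | cons L Ls ih =>
      show orSem M X (pand L (bigAnd Ls)) ↔ _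
      rw [orSem_pand, ih]
      constructor
      · rintro ⟨h1, h2⟩ K hK
        rcases List.mem_cons.mp hK with rfl | hK
        · exact h1
        · exact h2 K hK
      · intro h
        exact ⟨h L (List.mem_cons_self), fun K hK => h K (List.mem_cons_of_mem _ hK)⟩

lemma orSem_pimpl (M : KModel) (X : Set M.W) (a : CForm) (K : List CForm) :
    orSem M X (pimpl a K) ↔ ∀ Y ⊆ X, M.csat Y a → orSem M Y K := by
  constructor
  · rintro ⟨c, hc, h⟩ Y hYX hYa
    obtain ⟨b, hb, rfl⟩ := List.mem_map.mp hc
    exact ⟨b, hb, h Y hYX hYa⟩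
  · intro h
    obtain ⟨b, hb, hB⟩ := h (X ∩ {w | M.csat {w} a}) Set.inter_subset_left
      ((csat_flat M a _).mpr fun w hw => hw.2)
    exact ⟨a.impl b, List.mem_map.mpr ⟨b, hb, rfl⟩, (csat_impl_iff M a b X).mpr hB⟩


lemma depT_sat (M : KModel) (β : CForm) : ∀ (αs : List CForm) (X : Set M.W),
    orSem M X (depT αs β) ↔ M.sat X (.dep αs β) := by
  intro αs
  induction αs with
  | nil =>
      intro X
      show orSem M X [β, .neg β] ↔ _
      constructor
      · rintro ⟨a, ha, hXa⟩ w hw u hu _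
        rcases List.mem_cons.mp ha with rfl | ha
        · exact iff_of_true ((csat_flat M a X).mp hXa w hw)
            ((csat_flat M a X).mp hXa u hu)
        · have : a = .neg β := by simpa using ha
          subst this
          exact iff_of_false (hXa w hw) (hXa u hu)
      · intro h
        by_cases hc : ∃ w₀ ∈ X, M.csat {w₀} β
        · obtain ⟨w₀, hw₀, h₀⟩ := hc
          refine ⟨β, by simp, (csat_flat M β X).mpr fun w hw => ?_⟩
          exact (h w hw w₀ hw₀ (fun α hα => absurd hα List.not_mem_nil)).mpr h₀
        · push_neg at hc
          exact ⟨.neg β, by simp, fun w hw => hc w hw⟩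
  | cons γ αs ih =>
      intro X
      show orSem M X (pand (pimpl γ (depT αs β)) (pimpl (.neg γ) (depT αs β))) ↔ _
      rw [orSem_pand, orSem_pimpl, orSem_pimpl]
      simp only [ih]
      constructor
      · rintro ⟨h1, h2⟩ w hw u hu hagree
        have hγiff : M.csat {w} γ ↔ M.csat {u} γ := hagree γ (List.mem_cons_self)
        have htail : ∀ α ∈ αs, (M.csat {w} α ↔ M.csat {u} α) :=
          fun α hα => hagree α (List.mem_cons_of_mem _ hα)
        have hpairsub : ({w, u} : Set M.W) ⊆ X := by
          intro v hv
          simp only [Set.mem_insert_iff, Set.mem_singleton_iff] at hv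
          rcases hv with rfl | rfl
          · exact hw
          · exact hu
        by_cases hc : M.csat {w} γ
        · have hu' : M.csat {u} γ := hγiff.mp hc
          have hpair : M.csat ({w, u} : Set M.W) γ := by
            refine (csat_flat M γ _).mpr fun v hv => ?_
            simp only [Set.mem_insert_iff, Set.mem_singleton_iff] at hv
            rcases hv with rfl | rfl
            · exact hc
            · exact hu'
          exact h1 {w, u} hpairsub hpair w (Set.mem_insert w {u})
            u (Set.mem_insert_of_mem w rfl) htail
        · have hu' : ¬ M.csat {u} γ := fun h => hc (hγiff.mpr h)
          have hpair : M.csat ({w, u} : Set M.W) (.neg γ) := by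
            intro v hv
            simp only [Set.mem_insert_iff, Set.mem_singleton_iff] at hv
            rcases hv with rfl | rfl
            · exact hc
            · exact hu'
          exact h2 {w, u} hpairsub hpair w (Set.mem_insert w {u})
            u (Set.mem_insert_of_mem w rfl) htail
      · intro h
        constructor
        · intro Y hYX hYγ w hw u hu htail
          apply h w (hYX hw) u (hYX hu)
          intro α hα
          rcases List.mem_cons.mp hα with rfl | hα
          · exact iff_of_true ((csat_flat M α Y).mp hYγ w hw)
              ((csat_flat M α Y).mp hYγ u hu)
          · exact htail α hα
        · intro Y hYX hYγ w hw u hu htail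
          apply h w (hYX hw) u (hYX hu)
          intro α hα
          rcases List.mem_cons.mp hα with rfl | hα
          · exact iff_of_false (hYγ w hw) (hYγ u hu)
          · exact htail α hα

lemma mtTrans_sat (M : KModel) (φ : MTForm) : ∀ X : Set M.W,
    M.sat X φ ↔ orSem M X (mtTrans φ) := by
  induction φ with
  | var p => intro X; simp [orSem, mtTrans, KModel.sat, KModel.csat]
  | bot => intro X; simp [orSem, mtTrans, KModel.sat, KModel.csat]
  | cneg α => intro X; simp [orSem, mtTrans, KModel.sat, KModel.csat]
  | dep αs β => exact fun X => (depT_sat M β αs X).symm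
  | and φ ψ ih1 ih2 =>
      intro X
      show (M.sat X φ ∧ M.sat X ψ) ↔ orSem M X (pand (mtTrans φ) (mtTrans ψ))
      rw [ih1 X, ih2 X, orSem_pand]
  | tensor φ ψ ih1 ih2 =>
      intro X
      show (∃ Y Z, X = Y ∪ Z ∧ M.sat Y φ ∧ M.sat Z ψ) ↔
        orSem M X (ptens (mtTrans φ) (mtTrans ψ))
      rw [orSem_ptens]
      exact exists_congr fun Y => exists_congr fun Z =>
        and_congr_right fun _ => and_congr (ih1 Y) (ih2 Z)
  | or φ ψ ih1 ih2 =>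
      intro X
      show (M.sat X φ ∨ M.sat X ψ) ↔ orSem M X (mtTrans φ ++ mtTrans ψ)
      rw [ih1 X, ih2 X, orSem_append]
  | impl φ ψ ih1 ih2 =>
      intro X
      show (∀ Y ⊆ X, M.sat Y φ → M.sat Y ψ) ↔
        orSem M X (bigAnd ((mtTrans φ).map fun a => pimpl a (mtTrans ψ)))
      rw [orSem_bigAnd]
      constructor
      · intro h L hL
        obtain ⟨a, ha, rfl⟩ := List.mem_map.mp hL
        rw [orSem_pimpl]
        intro Y hYX hYa
        exact (ih2 Y).mp (h Y hYX ((ih1 Y).mpr ⟨a, ha, hYa⟩))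
      · intro h Y hYX hY
        obtain ⟨a, ha, hYa⟩ := (ih1 Y).mp hY
        have := h (pimpl a (mtTrans ψ)) (List.mem_map.mpr ⟨a, ha, rfl⟩)
        rw [orSem_pimpl] at this
        exact (ih2 Y).mpr (this Y hYX hYa)
  | box φ ih =>
      intro X
      show M.sat (M.img X) φ ↔ orSem M X ((mtTrans φ).map .box)
      rw [ih (M.img X)]
      simp only [orSem, List.mem_map]
      constructor
      · rintro ⟨a, ha, h⟩; exact ⟨a.box, ⟨a, ha, rfl⟩, h⟩
      · rintro ⟨c, ⟨a, ha, rfl⟩, h⟩; exact ⟨a, ha, h⟩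
  | dia φ ih =>
      intro X
      show (∃ Y, M.succT X Y ∧ M.sat Y φ) ↔ orSem M X ((mtTrans φ).map .dia)
      simp only [orSem, List.mem_map]
      constructor
      · rintro ⟨Y, hs, hY⟩
        obtain ⟨a, ha, h⟩ := (ih Y).mp hY
        exact ⟨a.dia, ⟨a, ha, rfl⟩, Y, hs, h⟩
      · rintro ⟨c, ⟨a, ha, rfl⟩, hc⟩
        obtain ⟨Y, hs, h⟩ : ∃ Y, M.succT X Y ∧ M.csat Y a := hc
        exact ⟨Y, hs, (ih Y).mpr ⟨a, ha, h⟩⟩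

/-- Classical disjunction (at the level of singletons) of a list. -/
def bigOr : List CForm → CForm
  | [] => .bot
  | a :: L => a.tensor (bigOr L)

lemma csat_singleton_bigOr (M : KModel) (w : M.W) : ∀ L : List CForm,
    M.csat {w} (bigOr L) ↔ ∃ a ∈ L, M.csat {w} a := by
  intro L
  induction L with
  | nil =>
      show ({w} : Set M.W) = ∅ ↔ _
      simp
  | cons a L ih =>
      show (∃ Y Z, ({w} : Set M.W) = Y ∪ Z ∧ M.csat Y a ∧ M.csat Z (bigOr L)) ↔ _
      constructor
      · rintro ⟨Y, Z, hw, hY, hZ⟩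
        have hwYZ : w ∈ Y ∪ Z := hw ▸ rfl
        rcases hwYZ with h | h
        · have hYe : Y = {w} := by
            apply Set.Subset.antisymm
            · intro v hv; rw [hw]; exact Or.inl hv
            · exact Set.singleton_subset_iff.mpr h
          exact ⟨a, List.mem_cons_self, hYe ▸ hY⟩
        · have hZe : Z = {w} := by
            apply Set.Subset.antisymm
            · intro v hv; rw [hw]; exact Or.inr hv
            · exact Set.singleton_subset_iff.mpr h
          obtain ⟨b, hb, h⟩ := ih.mp (hZe ▸ hZ)
          exact ⟨b, List.mem_cons_of_mem _ hb, h⟩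
      · rintro ⟨b, hb, h⟩
        rcases List.mem_cons.mp hb with rfl | hb
        · exact ⟨{w}, ∅, by simp, h, csat_empty M _⟩
        · exact ⟨∅, {w}, by simp, csat_empty M _, ih.mpr ⟨b, hb, h⟩⟩

/-- STATEMENT 13: Characterization of flat formulas: (a) φ is flat; (b) φ≡α for some
classical modal formula α; (c) ¬¬φ≡φ; (d) ⊨φ⊗¬φ are all equivalent. -/
theorem flat_characterization (φ : MTForm) :
    List.TFAE [Flat φ,
      ∃ α : CForm, MTEquiv φ α.toMT,
      MTEquiv (mneg (mneg φ)) φ,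
      MTValid (φ.tensor (mneg φ))] := by
  tfae_have 1 → 4 := by
    intro hflat M X
    refine ⟨{w ∈ X | M.sat {w} φ}, {w ∈ X | ¬ M.sat {w} φ}, ?_, ?_, ?_⟩
    · ext w; by_cases hc : M.sat {w} φ <;> simp [hc]
    · exact (hflat M _).mpr fun w hw => hw.2
    · intro Y hYZ hY
      show Y = ∅
      rw [Set.eq_empty_iff_forall_notMem]
      intro w hw
      exact (hYZ hw).2 ((hflat M Y).mp hY w hw)
  tfae_have 4 → 3 := by
    intro h
    constructor
    · intro M X hX
      obtain ⟨Y, Z, hXYZ, hY, hZ⟩ := h M X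
      have hZX : Z ⊆ X := by rw [hXYZ]; exact Set.subset_union_right
      have hZ0 : Z = ∅ := hX Z hZX hZ
      rw [hXYZ, hZ0, Set.union_empty]; exact hY
    · intro M X hX Y hYX hYneg
      exact hYneg Y (le_refl _) (sat_mono M φ hX hYX)
  tfae_have 3 → 1 := by
    intro h M X
    constructor
    · intro hX w hw
      exact sat_mono M φ hX (Set.singleton_subset_iff.mpr hw)
    · intro hall
      apply h.1 M X
      intro Y hYX hYneg
      show Y = ∅
      rw [Set.eq_empty_iff_forall_notMem]
      intro w hw
      have : M.sat {w} .bot :=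
        hYneg {w} (Set.singleton_subset_iff.mpr hw) (hall w (hYX hw))
      exact Set.singleton_ne_empty w this
  tfae_have 1 → 2 := by
    intro hflat
    refine ⟨bigOr (mtTrans φ), ?_, ?_⟩
    · intro M X hX
      rw [sat_toMT, csat_flat]
      intro w hw
      rw [csat_singleton_bigOr]
      exact (mtTrans_sat M φ {w}).mp ((hflat M X).mp hX w hw)
    · intro M X hX
      apply (hflat M X).mpr
      intro w hw
      apply (mtTrans_sat M φ {w}).mpr
      have := (csat_flat M _ X).mp ((sat_toMT M _ X).mp hX) w hw
      rw [csat_singleton_bigOr] at this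
      exact this
  tfae_have 2 → 1 := by
    rintro ⟨α, h1, h2⟩ M X
    constructor
    · intro hX w hw
      exact sat_mono M φ hX (Set.singleton_subset_iff.mpr hw)
    · intro hall
      apply h2 M X
      rw [sat_toMT, csat_flat]
      intro w hw
      exact (sat_toMT M α {w}).mp (h1 M {w} (hall w hw))
  tfae_finish
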